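/- Let B and C be the central binomial and Catalan generating functions, regarded as formal power series over ℝ, and let T_M = B·(C ∘ (zC²)) where ∘ denotes composition of formal power series. Then the coefficients a_n = [z^n]T_M satisfy a_n·√(π n³)/(25/4)^n → 5√15/9 as n → ∞; that is, a_n ∼ (5√15/9)·(1/√(π n³))·(25/4)^n. -/

import Mathlib

open PowerSeries Finset Filter Real

/-- The central binomial generating function `B = ∑ binom(2n,n) zⁿ` over `ℝ`. -/
noncomputable def Bgf : PowerSeries ℝ := PowerSeries.mk fun n => ((2 * n).choose n : ℝ)

/-- The Catalan generating function `C = ∑ Cₙ zⁿ` over `ℝ`. -/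
noncomputable def Cgf : PowerSeries ℝ := PowerSeries.mk fun n => (catalan n : ℝ)

/-- Composition `F ∘ a` of formal power series (intended for `a` with zero constant
term, in which case only the terms with `k ≤ n` contribute to the coefficient of `zⁿ`
in `∑ₖ ([zᵏ]F)·aᵏ`, so the finite sum below is the full composition). -/
noncomputable def PScomp (F a : PowerSeries ℝ) : PowerSeries ℝ :=
  PowerSeries.mk fun n => ∑ k ∈ Finset.range (n + 1),
    PowerSeries.coeff (R := ℝ) k F * PowerSeries.coeff (R := ℝ) n (a ^ k)

/-- `T_M = B·(C ∘ (zC²))`, the generating function for embedded new type trees. -/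
noncomputable def TM : PowerSeries ℝ := Bgf * PScomp Cgf (PowerSeries.X * Cgf ^ 2)



namespace S9

lemma coeff_PScomp (F a : PowerSeries ℝ) (n : ℕ) :
    coeff (R := ℝ) n (PScomp F a) = ∑ k ∈ range (n + 1), coeff (R := ℝ) k F * coeff (R := ℝ) n (a ^ k) := by
  simp [PScomp]

section comp
variable {a : PowerSeries ℝ}

lemma coeff_pow_eq_zero (ha : constantCoeff (R := ℝ) a = 0) {k n : ℕ} (h : n < k) :
    coeff (R := ℝ) n (a ^ k) = 0 := by
  obtain ⟨b, hb⟩ : (X : PowerSeries ℝ) ^ k ∣ a ^ k :=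
    pow_dvd_pow_of_dvd (PowerSeries.X_dvd_iff.2 ha) k
  rw [hb, PowerSeries.coeff_X_pow_mul']
  simp [Nat.not_le_of_lt h]

lemma coeff_aeval (ha : constantCoeff (R := ℝ) a = 0) (F : PowerSeries ℝ) {m n : ℕ} (h : n < m) :
    coeff (R := ℝ) n ((Polynomial.aeval a) (trunc m F)) = coeff (R := ℝ) n (PScomp F a) := by
  obtain ⟨m, rfl⟩ : ∃ m', m = m' + 1 := ⟨m - 1, by omega⟩
  rw [Polynomial.aeval_eq_sum_range' (natDegree_trunc_lt F m), coeff_PScomp, map_sum,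
    ← Finset.sum_subset (Finset.range_subset_range.2 (by omega : n + 1 ≤ m + 1))]
  · apply Finset.sum_congr rfl
    intro k hk
    simp only [mem_range] at hk
    rw [coeff_trunc, if_pos (by omega), map_smul, smul_eq_mul]
  · intro k hk hk2
    simp only [mem_range] at hk hk2
    rw [map_smul, smul_eq_mul, coeff_pow_eq_zero ha (by omega), mul_zero]

lemma PScomp_mul (ha : constantCoeff (R := ℝ) a = 0) (F G : PowerSeries ℝ) :
    PScomp (F * G) a = PScomp F a * PScomp G a := by
  ext n
  rw [← coeff_aeval ha (F * G) (Nat.lt_succ_self n)]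
  have key : coeff (R := ℝ) n ((Polynomial.aeval a) (trunc (n+1) (F*G)))
      = coeff (R := ℝ) n ((Polynomial.aeval a) (trunc (n+1) F * trunc (n+1) G)) := by
    have h2 : ∀ P : Polynomial ℝ, coeff (R := ℝ) n ((Polynomial.aeval a) P)
        = ∑ k ∈ range (n+1), P.coeff k * coeff (R := ℝ) n (a ^ k) := by
      intro P
      rw [Polynomial.aeval_eq_sum_range' (n := max (n+1) (P.natDegree + 1))
        (lt_of_lt_of_le (Nat.lt_succ_self _) (le_max_right _ _)), map_sum]
      rw [← Finset.sum_subset (Finset.range_subset_range.2 (le_max_left _ _))]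
      · exact Finset.sum_congr rfl fun k _ => by rw [map_smul, smul_eq_mul]
      · intro k hk hk2
        simp only [mem_range] at hk hk2
        rw [map_smul, smul_eq_mul, coeff_pow_eq_zero ha (by omega), mul_zero]
    rw [h2, h2]
    apply Finset.sum_congr rfl
    intro k hk
    simp only [mem_range] at hk
    congr 1
    rw [coeff_trunc, if_pos hk, coeff_mul_eq_coeff_trunc_mul_trunc F G hk, ← Polynomial.coe_mul,
      Polynomial.coeff_coe]
  rw [key, map_mul, PowerSeries.coeff_mul]
  rw [PowerSeries.coeff_mul]
  apply Finset.sum_congr rfl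
  rintro ⟨p, q⟩ hpq
  rw [Finset.HasAntidiagonal.mem_antidiagonal] at hpq
  rw [coeff_aeval ha F (by omega), coeff_aeval ha G (by omega)]

lemma PScomp_one (ha : constantCoeff (R := ℝ) a = 0) : PScomp 1 a = 1 := by
  ext n
  rw [coeff_PScomp]
  rw [Finset.sum_eq_single 0]
  · simp
  · intro k hk hk0
    rw [PowerSeries.coeff_one, if_neg hk0, zero_mul]
  · simp

lemma PScomp_X (ha : constantCoeff (R := ℝ) a = 0) : PScomp X a = a := by
  ext n
  rw [coeff_PScomp]
  rw [Finset.sum_eq_single 1]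
  · simp
  · intro k hk hk0
    rw [PowerSeries.coeff_X, if_neg hk0, zero_mul]
  · intro h
    simp only [mem_range, not_lt] at h
    obtain rfl : n = 0 := by omega
    simp [← ha, PowerSeries.coeff_zero_eq_constantCoeff]

lemma PScomp_add (F G : PowerSeries ℝ) : PScomp (F + G) a = PScomp F a + PScomp G a := by
  ext n
  simp [coeff_PScomp, add_mul, Finset.sum_add_distrib]

lemma PScomp_Cc (c : ℝ) : PScomp (PowerSeries.C (R := ℝ) c) a = PowerSeries.C (R := ℝ) c := by
  ext n
  rw [coeff_PScomp]
  rw [Finset.sum_eq_single 0]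
  · simp [PowerSeries.coeff_C]
  · intro k hk hk0
    rw [PowerSeries.coeff_C, if_neg hk0, zero_mul]
  · simp

end comp

end S9

namespace S9
open PowerSeries

noncomputable def kk : PowerSeries ℝ := PowerSeries.C (R := ℝ) (1/16)
noncomputable def k4 : PowerSeries ℝ := PowerSeries.C (R := ℝ) (1/4)

lemma hkk : (16 : PowerSeries ℝ) * kk = 1 := by
  rw [kk, ← map_ofNat (PowerSeries.C (R := ℝ)) 16, ← map_mul]; norm_num
lemma hk4 : (4 : PowerSeries ℝ) * k4 = 1 := by
  rw [k4, ← map_ofNat (PowerSeries.C (R := ℝ)) 4, ← map_mul]; norm_num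

lemma keyC : Cgf = 1 + X * Cgf ^ 2 := by
  ext n
  rw [map_add, PowerSeries.coeff_one]
  cases n with
  | zero => simp [Cgf]
  | succ n =>
    rw [if_neg (Nat.succ_ne_zero n), PowerSeries.coeff_succ_X_mul, pow_two,
      PowerSeries.coeff_mul]
    simp only [Cgf, coeff_mk, catalan_succ' n, zero_add]
    push_cast
    rfl

lemma constCgf : constantCoeff (R := ℝ) Cgf = 1 := by
  simp [Cgf, ← PowerSeries.coeff_zero_eq_constantCoeff]

noncomputable def uq : PowerSeries ℝ := kk * (5 * X + 4 * (X * Cgf))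
noncomputable def hq : PowerSeries ℝ := kk * (5 + 4 * Cgf)
noncomputable def Su : PowerSeries ℝ := PScomp Cgf uq
noncomputable def Sr : PowerSeries ℝ := PScomp Cgf (kk * (25 * X))
noncomputable def aJ : PowerSeries ℝ := 4 * uq
noncomputable def Ones : PowerSeries ℝ := PowerSeries.mk fun _ => (1 : ℝ)
noncomputable def Gg : PowerSeries ℝ := PScomp Ones aJ
noncomputable def Dd : PowerSeries ℝ := PScomp Cgf (X * Cgf ^ 2)
noncomputable def mm : PowerSeries ℝ := 1 - 2 * (X * Cgf ^ 2) * Dd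
noncomputable def qs : PowerSeries ℝ := 1 - 2 * uq * Su
noncomputable def rr : PowerSeries ℝ := 1 - 50 * kk * X * Sr
noncomputable def Cinv : PowerSeries ℝ := 1 - X * Cgf
noncomputable def Wgf : PowerSeries ℝ := k4 * Cinv * qs * Gg * (Bgf + 1) * (50 * kk)
noncomputable def Vgf : PowerSeries ℝ := k4 * Cinv * qs * Gg * (Bgf + 1) * (2 * hq * Su)

lemma const_uq : constantCoeff (R := ℝ) uq = 0 := by simp [uq, kk]
lemma const_XC2 : constantCoeff (R := ℝ) (X * Cgf ^ 2) = 0 := by simp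
lemma const_aJ : constantCoeff (R := ℝ) aJ = 0 := by simp [aJ, const_uq]
lemma const_KX : constantCoeff (R := ℝ) (kk * (25 * X)) = 0 := by simp [kk]

lemma quadC {a : PowerSeries ℝ} (ha : constantCoeff (R := ℝ) a = 0) :
    PScomp Cgf a = 1 + a * (PScomp Cgf a) ^ 2 := by
  have h : PScomp (1 + X * (Cgf * Cgf)) a = 1 + a * (PScomp Cgf a) ^ 2 := by
    rw [PScomp_add, PScomp_one ha, PScomp_mul ha, PScomp_mul ha, PScomp_X ha]; ring
  calc PScomp Cgf a = PScomp (1 + X * (Cgf * Cgf)) a := by rw [← pow_two, ← keyC]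
  _ = 1 + a * (PScomp Cgf a) ^ 2 := h

lemma Su_eq : Su = 1 + uq * Su ^ 2 := quadC const_uq
lemma Dd_eq : Dd = 1 + (X * Cgf ^ 2) * Dd ^ 2 := quadC const_XC2
lemma Sr_eq : Sr = 1 + (kk * (25 * X)) * Sr ^ 2 := quadC const_KX

lemma Ones_eq : Ones = 1 + X * Ones := by
  ext n
  rw [map_add, PowerSeries.coeff_one]
  cases n with
  | zero => simp [Ones]
  | succ n => rw [if_neg (Nat.succ_ne_zero n), PowerSeries.coeff_succ_X_mul]; simp [Ones]

lemma Gg_eq : Gg = 1 + aJ * Gg := by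
  have h1 : PScomp (1 + X * Ones) aJ = 1 + aJ * PScomp Ones aJ := by
    rw [PScomp_add, PScomp_one const_aJ, PScomp_mul const_aJ, PScomp_X const_aJ]
  calc Gg = PScomp (1 + X * Ones) aJ := by rw [show Gg = PScomp Ones aJ from rfl, ← Ones_eq]
  _ = 1 + aJ * Gg := h1

lemma XC2_eq : X * Cgf ^ 2 = Cgf - 1 := by linear_combination -keyC

lemma CCinv : Cgf * Cinv = 1 := by rw [Cinv]; linear_combination -XC2_eq

lemma keyg : X * Cgf = X + (X * Cgf) ^ 2 := by linear_combination X * keyC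

lemma Bderiv : Bgf = d⁄dX ℝ (X * Cgf) := by
  ext n
  rw [PowerSeries.coeff_derivative, PowerSeries.coeff_succ_X_mul]
  simp only [Bgf, Cgf, coeff_mk]
  have h2 : ((n + 1) * catalan n : ℝ) = ((2*n).choose n : ℝ) := by
    rw_mod_cast [succ_mul_catalan_eq_centralBinom n]; rw [Nat.centralBinom]
  push_cast at h2 ⊢
  linarith

lemma Bs : Bgf * (1 - 2 * (X * Cgf)) = 1 := by
  have hd := congrArg (d⁄dX ℝ) keyg
  rw [map_add, PowerSeries.derivative_X, pow_two,
    Derivation.leibniz (d⁄dX ℝ) (X * Cgf) (X * Cgf)] at hd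
  simp only [smul_eq_mul] at hd
  rw [Bderiv]
  linear_combination hd

lemma q2 : qs ^ 2 = 1 - aJ := by
  rw [qs, aJ]
  linear_combination (-4 * uq) * Su_eq

lemma r2 : rr ^ 2 = 1 - 100 * kk * X := by
  rw [rr]
  linear_combination (-100 * kk * X) * Sr_eq

lemma m2 : mm ^ 2 = 5 - 4 * Cgf := by
  rw [mm]
  have h2 : (X * Cgf ^ 2) * Dd ^ 2 = Dd - 1 := by linear_combination -Dd_eq
  linear_combination (4 * (X * Cgf ^ 2)) * h2 - 4 * XC2_eq

lemma mq2 : (mm * qs) ^ 2 = rr ^ 2 := by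
  rw [mul_pow, m2, q2, r2, aJ, uq]
  linear_combination (64 * kk) * XC2_eq + (4 * (Cgf - 1)) * hkk

lemma const_PScomp (F a : PowerSeries ℝ) : constantCoeff (R := ℝ) (PScomp F a) = coeff (R := ℝ) 0 F := by
  rw [← PowerSeries.coeff_zero_eq_constantCoeff, coeff_PScomp]
  simp

lemma const_Su : constantCoeff (R := ℝ) Su = 1 := by simp [Su, const_PScomp, Cgf]
lemma const_Sr : constantCoeff (R := ℝ) Sr = 1 := by simp [Sr, const_PScomp, Cgf]
lemma const_Gg : constantCoeff (R := ℝ) Gg = 1 := by simp [Gg, const_PScomp, Ones]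
lemma const_Dd : constantCoeff (R := ℝ) Dd = 1 := by simp [Dd, const_PScomp, Cgf]
lemma const_qs : constantCoeff (R := ℝ) qs = 1 := by simp [qs, const_uq]
lemma const_rr : constantCoeff (R := ℝ) rr = 1 := by simp [rr, kk]
lemma const_mm : constantCoeff (R := ℝ) mm = 1 := by simp [mm]

lemma mq_eq_r : mm * qs = rr := by
  have h2 : (mm * qs - rr) * (mm * qs + rr) = 0 := by linear_combination mq2
  rcases mul_eq_zero.1 h2 with h3 | h3
  · linear_combination h3
  · exfalso
    have h4 := congrArg (constantCoeff (R := ℝ)) h3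
    rw [map_add, map_mul, const_mm, const_qs, const_rr, map_zero] at h4
    norm_num at h4

lemma twoC : (2 - 2 * (X * Cgf)) * Cgf = 2 := by linear_combination -2 * XC2_eq

lemma BC : (Bgf + 1) * Cgf = 2 * Bgf := by
  linear_combination Bgf * twoC - Cgf * Bs

lemma TMBD : TM = Bgf * Dd := rfl

lemma master : 4 * X * Cgf * qs * TM = (Bgf + 1) * (qs - rr) := by
  rw [TMBD]
  have hm : mm = 1 - 2 * (X * Cgf ^ 2) * Dd := rfl
  linear_combination (-(Bgf + 1)) * mq_eq_r + ((Bgf + 1) * qs) * hm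
    + (-(2 * X * Cgf * Dd * qs)) * BC

lemma qqGg : qs ^ 2 * Gg = 1 := by
  rw [q2]
  linear_combination Gg_eq

lemma uqhq : uq = X * hq := by rw [uq, hq]; ring

lemma TMdecomp : TM = Wgf * Sr - Vgf := by
  have h4 : 4 * Cgf * qs * TM = (Bgf + 1) * (50 * kk * Sr - 2 * hq * Su) := by
    apply mul_left_cancel₀ (PowerSeries.X_ne_zero (R := ℝ))
    have hqr : qs - rr = X * (50 * kk * Sr - 2 * hq * Su) := by
      rw [qs, rr, uqhq]; ring
    linear_combination master + (Bgf + 1) * hqr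
  have h6 : (k4 * 4) * (Cgf * Cinv) * (qs ^ 2 * Gg) * TM
      = k4 * Cinv * qs * Gg * ((Bgf + 1) * (50 * kk * Sr - 2 * hq * Su)) := by
    linear_combination (k4 * Cinv * qs * Gg) * h4
  rw [show k4 * 4 = (4 : PowerSeries ℝ) * k4 by ring, hk4, CCinv, qqGg] at h6
  simp only [one_mul, mul_one] at h6
  rw [Wgf, Vgf]
  linear_combination h6

end S9
namespace S9
open PowerSeries

/-! ### Nonnegativity of coefficients -/

def nn (f : PowerSeries ℝ) : Prop := ∀ n, 0 ≤ coeff (R := ℝ) n f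

lemma nn_mul {f g : PowerSeries ℝ} (hf : nn f) (hg : nn g) : nn (f * g) := by
  intro n
  rw [PowerSeries.coeff_mul]
  exact Finset.sum_nonneg fun p _ => mul_nonneg (hf _) (hg _)

lemma nn_pow {f : PowerSeries ℝ} (hf : nn f) (k : ℕ) : nn (f ^ k) := by
  induction k with
  | zero => intro n; rw [pow_zero, PowerSeries.coeff_one]; positivity
  | succ k ih => rw [pow_succ]; exact nn_mul ih hf

lemma nn_add {f g : PowerSeries ℝ} (hf : nn f) (hg : nn g) : nn (f + g) := fun n => by
  rw [map_add]; exact add_nonneg (hf n) (hg n)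

lemma nn_PScomp {F a : PowerSeries ℝ} (hF : nn F) (ha : nn a) : nn (PScomp F a) := by
  intro n
  rw [coeff_PScomp]
  exact Finset.sum_nonneg fun k _ => mul_nonneg (hF _) (nn_pow ha k _)

lemma nn_Cgf : nn Cgf := fun n => by simp [Cgf]
lemma nn_X : nn (X : PowerSeries ℝ) := fun n => by
  rw [PowerSeries.coeff_X]; split <;> norm_num
lemma nn_Ones : nn Ones := fun n => by simp [Ones]
lemma nn_kk : nn kk := fun n => by
  rw [kk, PowerSeries.coeff_C]; split <;> norm_num
lemma nn_num (m : ℕ) [m.AtLeastTwo] : nn (OfNat.ofNat m : PowerSeries ℝ) := by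
  rw [← map_ofNat (PowerSeries.C (R := ℝ)) m]
  intro n
  rw [PowerSeries.coeff_C]
  split
  · rw [← Nat.cast_ofNat (R := ℝ) (n := m)]
    exact Nat.cast_nonneg _
  · exact le_refl 0
lemma nn_uq : nn uq := by
  rw [uq]
  exact nn_mul nn_kk (nn_add (nn_mul (nn_num 5) nn_X) (nn_mul (nn_num 4) (nn_mul nn_X nn_Cgf)))
lemma nn_Su : nn Su := nn_PScomp nn_Cgf nn_uq
lemma nn_aJ : nn aJ := nn_mul (nn_num 4) nn_uq
lemma nn_Gg : nn Gg := nn_PScomp nn_Ones nn_aJ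
lemma nn_Sq2 : nn (Su ^ 2) := nn_pow nn_Su 2

/-! ### Weighted partial sum bounds -/

def Pb (f : PowerSeries ℝ) (M : ℝ) : Prop :=
  ∀ N : ℕ, ∑ n ∈ Finset.range N, |coeff (R := ℝ) n f| * (1/5 : ℝ) ^ n ≤ M

lemma Pb_nonneg {f M} (h : Pb f M) : 0 ≤ M := by simpa using h 0

lemma Pb_mono {f M M'} (h : Pb f M) (hle : M ≤ M') : Pb f M' := fun N => (h N).trans hle

lemma Pb_congr {f g M} (hfg : f = g) (h : Pb g M) : Pb f M := hfg ▸ h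

private lemma biUnion_eq (N : ℕ) (g : ℕ × ℕ → ℝ) :
    ∑ n ∈ Finset.range N, ∑ p ∈ Finset.HasAntidiagonal.antidiagonal n, g p
      = ∑ p ∈ (Finset.range N).biUnion Finset.HasAntidiagonal.antidiagonal, g p := by
  refine (Finset.sum_biUnion ?_).symm
  intro i _ j _ hij
  simp only [Function.onFun]
  rw [Finset.disjoint_left]
  intro p hpi hpj
  rw [Finset.HasAntidiagonal.mem_antidiagonal] at hpi hpj
  exact hij (hpi ▸ hpj)

lemma conv_le (x y : ℕ → ℝ) (hx : ∀ i, 0 ≤ x i) (hy : ∀ j, 0 ≤ y j) (N : ℕ)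
    (A B : Finset ℕ)
    (h : ∀ i j : ℕ, i + j < N → x i * y j ≠ 0 → i ∈ A ∧ j ∈ B) :
    ∑ n ∈ Finset.range N, (∑ p ∈ Finset.HasAntidiagonal.antidiagonal n, x p.1 * y p.2) * (1/5 : ℝ) ^ n
      ≤ (∑ i ∈ A, x i * (1/5 : ℝ) ^ i) * (∑ j ∈ B, y j * (1/5 : ℝ) ^ j) := by
  have key : ∀ n ∈ Finset.range N,
      (∑ p ∈ Finset.HasAntidiagonal.antidiagonal n, x p.1 * y p.2) * (1/5 : ℝ) ^ n
        = ∑ p ∈ Finset.HasAntidiagonal.antidiagonal n, (x p.1 * (1/5:ℝ)^p.1) * (y p.2 * (1/5:ℝ)^p.2) := by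
    intro n _
    rw [Finset.sum_mul]
    refine Finset.sum_congr rfl fun p hp => ?_
    rw [Finset.HasAntidiagonal.mem_antidiagonal] at hp
    rw [← hp, pow_add]; ring
  rw [Finset.sum_congr rfl key, biUnion_eq, Finset.sum_mul_sum, ← Finset.sum_product']
  rw [← Finset.sum_filter_ne_zero]
  apply Finset.sum_le_sum_of_subset_of_nonneg
  · intro p hp
    rw [Finset.mem_filter, Finset.mem_biUnion] at hp
    obtain ⟨⟨n, hn, hpn⟩, hpne⟩ := hp
    rw [Finset.HasAntidiagonal.mem_antidiagonal] at hpn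
    rw [Finset.mem_range] at hn
    have hxy : x p.1 * y p.2 ≠ 0 := by
      intro h0
      apply hpne
      rw [show x p.1 * (1/5:ℝ)^p.1 * (y p.2 * (1/5:ℝ)^p.2)
        = (x p.1 * y p.2) * ((1/5:ℝ)^p.1 * (1/5:ℝ)^p.2) by ring, h0, zero_mul]
    obtain ⟨h1, h2⟩ := h p.1 p.2 (by omega) hxy
    exact Finset.mem_product.2 ⟨h1, h2⟩
  · intro p _ _
    apply mul_nonneg <;> apply mul_nonneg
    exacts [hx _, by positivity, hy _, by positivity]

lemma partial_mul_le (f g : PowerSeries ℝ) (N : ℕ) :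
    ∑ n ∈ Finset.range N, |coeff (R := ℝ) n (f * g)| * (1/5 : ℝ) ^ n
      ≤ (∑ n ∈ Finset.range N, |coeff (R := ℝ) n f| * (1/5 : ℝ) ^ n)
        * (∑ n ∈ Finset.range N, |coeff (R := ℝ) n g| * (1/5 : ℝ) ^ n) := by
  have h1 : ∀ n, |coeff (R := ℝ) n (f * g)| ≤ ∑ p ∈ Finset.HasAntidiagonal.antidiagonal n, |coeff (R := ℝ) p.1 f| * |coeff (R := ℝ) p.2 g| := by
    intro n
    rw [PowerSeries.coeff_mul]
    refine (Finset.abs_sum_le_sum_abs _ _).trans ?_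
    exact le_of_eq (Finset.sum_congr rfl fun p _ => abs_mul _ _)
  have step1 : ∑ n ∈ Finset.range N, |coeff (R := ℝ) n (f * g)| * (1/5 : ℝ) ^ n
      ≤ ∑ n ∈ Finset.range N,
        (∑ p ∈ Finset.HasAntidiagonal.antidiagonal n, |coeff (R := ℝ) p.1 f| * |coeff (R := ℝ) p.2 g|) * (1/5 : ℝ) ^ n := by
    refine Finset.sum_le_sum fun n _ => ?_
    exact mul_le_mul_of_nonneg_right (h1 n) (by positivity)
  refine step1.trans ?_
  exact conv_le (fun i => |coeff (R := ℝ) i f|) (fun j => |coeff (R := ℝ) j g|)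
    (fun _ => abs_nonneg _) (fun _ => abs_nonneg _) N (Finset.range N) (Finset.range N)
    (fun i j hij _ => ⟨Finset.mem_range.2 (by omega), Finset.mem_range.2 (by omega)⟩)

lemma Pb_partial_nonneg (f : PowerSeries ℝ) (N : ℕ) :
    0 ≤ ∑ n ∈ Finset.range N, |coeff (R := ℝ) n f| * (1/5 : ℝ) ^ n :=
  Finset.sum_nonneg fun n _ => by positivity

lemma Pb_mul {f g Mf Mg} (hf : Pb f Mf) (hg : Pb g Mg) : Pb (f * g) (Mf * Mg) := by
  intro N
  refine (partial_mul_le f g N).trans ?_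
  exact mul_le_mul (hf N) (hg N) (Pb_partial_nonneg g N) (Pb_nonneg hf)

lemma Pb_add {f g Mf Mg} (hf : Pb f Mf) (hg : Pb g Mg) : Pb (f + g) (Mf + Mg) := by
  intro N
  have h : ∀ n ∈ Finset.range N, |coeff (R := ℝ) n (f + g)| * (1/5:ℝ)^n
      ≤ |coeff (R := ℝ) n f| * (1/5:ℝ)^n + |coeff (R := ℝ) n g| * (1/5:ℝ)^n := by
    intro n _
    rw [map_add, ← add_mul]
    exact mul_le_mul_of_nonneg_right (abs_add_le _ _) (by positivity)
  calc ∑ n ∈ Finset.range N, |coeff (R := ℝ) n (f + g)| * (1/5:ℝ)^n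
      ≤ ∑ n ∈ Finset.range N, (|coeff (R := ℝ) n f| * (1/5:ℝ)^n + |coeff (R := ℝ) n g| * (1/5:ℝ)^n) :=
        Finset.sum_le_sum h
    _ = (∑ n ∈ Finset.range N, |coeff (R := ℝ) n f| * (1/5:ℝ)^n)
        + ∑ n ∈ Finset.range N, |coeff (R := ℝ) n g| * (1/5:ℝ)^n := Finset.sum_add_distrib
    _ ≤ Mf + Mg := add_le_add (hf N) (hg N)

lemma Pb_sub {f g Mf Mg} (hf : Pb f Mf) (hg : Pb g Mg) : Pb (f - g) (Mf + Mg) := by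
  intro N
  have h : ∀ n ∈ Finset.range N, |coeff (R := ℝ) n (f - g)| * (1/5:ℝ)^n
      ≤ |coeff (R := ℝ) n f| * (1/5:ℝ)^n + |coeff (R := ℝ) n g| * (1/5:ℝ)^n := by
    intro n _
    rw [map_sub, ← add_mul]
    exact mul_le_mul_of_nonneg_right (abs_sub _ _) (by positivity)
  calc ∑ n ∈ Finset.range N, |coeff (R := ℝ) n (f - g)| * (1/5:ℝ)^n
      ≤ ∑ n ∈ Finset.range N, (|coeff (R := ℝ) n f| * (1/5:ℝ)^n + |coeff (R := ℝ) n g| * (1/5:ℝ)^n) :=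
        Finset.sum_le_sum h
    _ = (∑ n ∈ Finset.range N, |coeff (R := ℝ) n f| * (1/5:ℝ)^n)
        + ∑ n ∈ Finset.range N, |coeff (R := ℝ) n g| * (1/5:ℝ)^n := Finset.sum_add_distrib
    _ ≤ Mf + Mg := add_le_add (hf N) (hg N)

lemma Pb_of_single {f : PowerSeries ℝ} {k : ℕ} {c : ℝ}
    (h : ∀ n, |coeff (R := ℝ) n f| * (1/5:ℝ)^n = if n = k then c else 0) (hc : 0 ≤ c) : Pb f c := by
  intro N
  rw [Finset.sum_congr rfl fun n _ => h n, Finset.sum_ite_eq' (Finset.range N) k fun _ => c]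
  split <;> simp [hc]

lemma Pb_one : Pb 1 1 := by
  refine Pb_of_single (k := 0) (fun n => ?_) (by norm_num)
  rw [PowerSeries.coeff_one]
  split <;> simp [*]

lemma Pb_X : Pb X (1/5) := by
  refine Pb_of_single (k := 1) (fun n => ?_) (by norm_num)
  rw [PowerSeries.coeff_X]
  split <;> simp [*]

lemma Pb_C (c : ℝ) : Pb (PowerSeries.C (R := ℝ) c) |c| := by
  refine Pb_of_single (k := 0) (fun n => ?_) (abs_nonneg c)
  rw [PowerSeries.coeff_C]
  split <;> simp [*]

end S9
namespace S9
open PowerSeries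

lemma partial_mul_le' {f : PowerSeries ℝ} (g : PowerSeries ℝ)
    (ha0 : constantCoeff (R := ℝ) f = 0) (N : ℕ) :
    ∑ n ∈ Finset.range (N + 1), |coeff (R := ℝ) n (f * g)| * (1/5 : ℝ) ^ n
      ≤ (∑ n ∈ Finset.range (N + 1), |coeff (R := ℝ) n f| * (1/5 : ℝ) ^ n)
        * (∑ n ∈ Finset.range N, |coeff (R := ℝ) n g| * (1/5 : ℝ) ^ n) := by
  have h1 : ∀ n, |coeff (R := ℝ) n (f * g)| ≤ ∑ p ∈ Finset.HasAntidiagonal.antidiagonal n, |coeff (R := ℝ) p.1 f| * |coeff (R := ℝ) p.2 g| := by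
    intro n
    rw [PowerSeries.coeff_mul]
    refine (Finset.abs_sum_le_sum_abs _ _).trans ?_
    exact le_of_eq (Finset.sum_congr rfl fun p _ => abs_mul _ _)
  have step1 : ∑ n ∈ Finset.range (N+1), |coeff (R := ℝ) n (f * g)| * (1/5 : ℝ) ^ n
      ≤ ∑ n ∈ Finset.range (N+1),
        (∑ p ∈ Finset.HasAntidiagonal.antidiagonal n, |coeff (R := ℝ) p.1 f| * |coeff (R := ℝ) p.2 g|) * (1/5 : ℝ) ^ n := by
    refine Finset.sum_le_sum fun n _ => ?_
    exact mul_le_mul_of_nonneg_right (h1 n) (by positivity)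
  refine step1.trans ?_
  refine conv_le (fun i => |coeff (R := ℝ) i f|) (fun j => |coeff (R := ℝ) j g|)
    (fun _ => abs_nonneg _) (fun _ => abs_nonneg _) (N+1) (Finset.range (N+1)) (Finset.range N) ?_
  intro i j hij hne
  refine ⟨Finset.mem_range.2 (by omega), Finset.mem_range.2 ?_⟩
  rcases Nat.eq_zero_or_pos i with rfl | hi
  · exfalso
    apply hne
    simp only [PowerSeries.coeff_zero_eq_constantCoeff, ha0, abs_zero, zero_mul]
  · omega

lemma partial_one_le (N : ℕ) :
    ∑ n ∈ Finset.range N, |coeff (R := ℝ) n (1 : PowerSeries ℝ)| * (1/5 : ℝ) ^ n ≤ 1 := Pb_one N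

lemma Pb_rec_quad {f a : PowerSeries ℝ} {α c : ℝ} (hf : f = 1 + a * f ^ 2)
    (ha0 : constantCoeff (R := ℝ) a = 0) (hPa : Pb a α) (h1 : 1 + α * c ^ 2 ≤ c) (hc0 : 0 ≤ c) :
    Pb f c := by
  have hα : 0 ≤ α := Pb_nonneg hPa
  intro N
  induction N with
  | zero => simpa using hc0
  | succ N ih =>
    have habs : ∀ n ∈ Finset.range (N+1), |coeff (R := ℝ) n f| * (1/5:ℝ)^n
        ≤ |coeff (R := ℝ) n (1 : PowerSeries ℝ)| * (1/5:ℝ)^n + |coeff (R := ℝ) n (a * f^2)| * (1/5:ℝ)^n := by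
      intro n _
      rw [← add_mul]
      refine mul_le_mul_of_nonneg_right ?_ (by positivity)
      calc |coeff (R := ℝ) n f| = |coeff (R := ℝ) n (1 : PowerSeries ℝ) + coeff (R := ℝ) n (a * f^2)| := by
            rw [← map_add]; exact congrArg abs (congrArg (coeff (R := ℝ) n) hf)
      _ ≤ _ := abs_add_le _ _
    have hsq : ∑ n ∈ Finset.range N, |coeff (R := ℝ) n (f ^ 2)| * (1/5:ℝ)^n
        ≤ (∑ n ∈ Finset.range N, |coeff (R := ℝ) n f| * (1/5:ℝ)^n) ^ 2 := by
      rw [pow_two, pow_two]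
      exact partial_mul_le f f N
    calc ∑ n ∈ Finset.range (N+1), |coeff (R := ℝ) n f| * (1/5:ℝ)^n
        ≤ ∑ n ∈ Finset.range (N+1), (|coeff (R := ℝ) n (1 : PowerSeries ℝ)| * (1/5:ℝ)^n
            + |coeff (R := ℝ) n (a * f^2)| * (1/5:ℝ)^n) := Finset.sum_le_sum habs
      _ = (∑ n ∈ Finset.range (N+1), |coeff (R := ℝ) n (1 : PowerSeries ℝ)| * (1/5:ℝ)^n)
            + ∑ n ∈ Finset.range (N+1), |coeff (R := ℝ) n (a * f^2)| * (1/5:ℝ)^n :=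
          Finset.sum_add_distrib
      _ ≤ 1 + α * c ^ 2 := by
          refine add_le_add (partial_one_le _) ?_
          refine (partial_mul_le' (f ^ 2) ha0 N).trans ?_
          have h2 : ∑ n ∈ Finset.range N, |coeff (R := ℝ) n (f^2)| * (1/5:ℝ)^n ≤ c ^ 2 := by
            refine hsq.trans ?_
            have := Pb_partial_nonneg f N
            nlinarith [ih]
          have h3 := hPa (N+1)
          have := Pb_partial_nonneg a (N+1)
          have h4 : 0 ≤ ∑ n ∈ Finset.range N, |coeff (R := ℝ) n (f^2)| * (1/5:ℝ)^n :=
            Pb_partial_nonneg _ N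
          nlinarith
      _ ≤ c := h1

lemma Pb_rec_lin {f a : PowerSeries ℝ} {α c : ℝ} (hf : f = 1 + a * f)
    (ha0 : constantCoeff (R := ℝ) a = 0) (hPa : Pb a α) (h1 : 1 + α * c ≤ c) (hc0 : 0 ≤ c) :
    Pb f c := by
  have hα : 0 ≤ α := Pb_nonneg hPa
  intro N
  induction N with
  | zero => simpa using hc0
  | succ N ih =>
    have habs : ∀ n ∈ Finset.range (N+1), |coeff (R := ℝ) n f| * (1/5:ℝ)^n
        ≤ |coeff (R := ℝ) n (1 : PowerSeries ℝ)| * (1/5:ℝ)^n + |coeff (R := ℝ) n (a * f)| * (1/5:ℝ)^n := by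
      intro n _
      rw [← add_mul]
      refine mul_le_mul_of_nonneg_right ?_ (by positivity)
      calc |coeff (R := ℝ) n f| = |coeff (R := ℝ) n (1 : PowerSeries ℝ) + coeff (R := ℝ) n (a * f)| := by
            rw [← map_add]; exact congrArg abs (congrArg (coeff (R := ℝ) n) hf)
      _ ≤ _ := abs_add_le _ _
    calc ∑ n ∈ Finset.range (N+1), |coeff (R := ℝ) n f| * (1/5:ℝ)^n
        ≤ ∑ n ∈ Finset.range (N+1), (|coeff (R := ℝ) n (1 : PowerSeries ℝ)| * (1/5:ℝ)^n
            + |coeff (R := ℝ) n (a * f)| * (1/5:ℝ)^n) := Finset.sum_le_sum habs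
      _ = (∑ n ∈ Finset.range (N+1), |coeff (R := ℝ) n (1 : PowerSeries ℝ)| * (1/5:ℝ)^n)
            + ∑ n ∈ Finset.range (N+1), |coeff (R := ℝ) n (a * f)| * (1/5:ℝ)^n :=
          Finset.sum_add_distrib
      _ ≤ 1 + α * c := by
          refine add_le_add (partial_one_le _) ?_
          refine (partial_mul_le' f ha0 N).trans ?_
          have h3 := hPa (N+1)
          have := Pb_partial_nonneg a (N+1)
          have h4 := Pb_partial_nonneg f N
          nlinarith [ih]
      _ ≤ c := h1

lemma Pb_num (m : ℕ) [m.AtLeastTwo] : Pb (OfNat.ofNat m : PowerSeries ℝ) (OfNat.ofNat m : ℝ) := by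
  have h : (OfNat.ofNat m : PowerSeries ℝ) = PowerSeries.C (R := ℝ) (OfNat.ofNat m) :=
    (map_ofNat _ m).symm
  refine Pb_congr h (Pb_mono (Pb_C _) ?_)
  have h0 : (0:ℝ) ≤ OfNat.ofNat m := by
    rw [← Nat.cast_ofNat (R := ℝ) (n := m)]
    exact Nat.cast_nonneg _
  exact le_of_eq (abs_of_nonneg h0)

lemma Pb_Cgf : Pb Cgf (3/2) :=
  Pb_rec_quad keyC PowerSeries.constantCoeff_X Pb_X (by norm_num) (by norm_num)

lemma Pb_XC : Pb (X * Cgf) (3/10) := Pb_mono (Pb_mul Pb_X Pb_Cgf) (by norm_num)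

lemma Pb_kk : Pb kk (1/16) := Pb_mono (Pb_C _) (by rw [abs_of_nonneg] <;> norm_num)
lemma Pb_k4 : Pb k4 (1/4) := Pb_mono (Pb_C _) (by rw [abs_of_nonneg] <;> norm_num)

lemma Pb_uq : Pb uq (11/80) := by
  have h : Pb (5 * X + 4 * (X * Cgf)) (11/5) :=
    Pb_mono (Pb_add (Pb_mul (Pb_num 5) Pb_X) (Pb_mul (Pb_num 4) Pb_XC)) (by norm_num)
  exact Pb_mono (Pb_congr uq.eq_def (Pb_mul Pb_kk h)) (by norm_num)

lemma Pb_Su : Pb Su 2 := Pb_rec_quad Su_eq const_uq Pb_uq (by norm_num) (by norm_num)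

lemma Pb_aJ : Pb aJ (11/20) :=
  Pb_mono (Pb_congr aJ.eq_def (Pb_mul (Pb_num 4) Pb_uq)) (by norm_num)

lemma Pb_Gg : Pb Gg (20/9) := Pb_rec_lin Gg_eq const_aJ Pb_aJ (by norm_num) (by norm_num)

lemma Pb_qs : Pb qs (31/20) := by
  refine Pb_mono (Pb_congr qs.eq_def (Pb_sub Pb_one
    (Pb_mul (Pb_mul (Pb_num 2) Pb_uq) Pb_Su))) (by norm_num)

lemma Pb_Cinv : Pb Cinv (13/10) :=
  Pb_mono (Pb_congr Cinv.eq_def (Pb_sub Pb_one Pb_XC)) (by norm_num)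

lemma Pb_hq : Pb hq (11/16) := by
  have h : Pb ((5 : PowerSeries ℝ) + 4 * Cgf) 11 :=
    Pb_mono (Pb_add (Pb_num 5) (Pb_mul (Pb_num 4) Pb_Cgf)) (by norm_num)
  exact Pb_mono (Pb_congr hq.eq_def (Pb_mul Pb_kk h)) (by norm_num)

lemma Pb_Bgf : Pb Bgf 5 := by
  have hb : ∀ n, |coeff (R := ℝ) n Bgf| * (1/5:ℝ)^n ≤ (4/5:ℝ)^n := by
    intro n
    rw [show coeff (R := ℝ) n Bgf = ((2*n).choose n : ℝ) by simp [Bgf]]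
    rw [abs_of_nonneg (by positivity)]
    have h1 : (2*n).choose n ≤ 4^n := by
      calc (2*n).choose n ≤ ∑ i ∈ Finset.range (2*n+1), (2*n).choose i :=
            Finset.single_le_sum (fun i _ => Nat.zero_le _) (Finset.mem_range.2 (by omega))
      _ = 2 ^ (2*n) := Nat.sum_range_choose (2*n)
      _ = 4 ^ n := by rw [show (4:ℕ) = 2^2 by norm_num, ← pow_mul]
    have h2 : ((2*n).choose n : ℝ) ≤ (4:ℝ)^n := by exact_mod_cast h1
    calc ((2*n).choose n : ℝ) * (1/5:ℝ)^n ≤ (4:ℝ)^n * (1/5:ℝ)^n :=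
          mul_le_mul_of_nonneg_right h2 (by positivity)
    _ = (4/5:ℝ)^n := by rw [← mul_pow]; norm_num
  intro N
  calc ∑ n ∈ Finset.range N, |coeff (R := ℝ) n Bgf| * (1/5:ℝ)^n
      ≤ ∑ n ∈ Finset.range N, (4/5:ℝ)^n := Finset.sum_le_sum fun n _ => hb n
    _ ≤ 5 := by
        rw [geom_sum_eq (by norm_num : (4/5:ℝ) ≠ 1)]
        have h3 : (0:ℝ) ≤ (4/5:ℝ)^N := by positivity
        have h4 : (4/5:ℝ)^N ≤ 1 := by
          apply pow_le_one₀ <;> norm_num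
        rw [div_le_iff_of_neg (by norm_num : (4/5:ℝ) - 1 < 0)]
        nlinarith

lemma Pb_B1 : Pb (Bgf + 1) 6 := Pb_mono (Pb_add Pb_Bgf Pb_one) (by norm_num)

lemma Pb_Wgf : Pb Wgf 21 := by
  have h50 : Pb (50 * kk) (50/16) :=
    Pb_mono (Pb_mul (Pb_num 50) Pb_kk) (by norm_num)
  refine Pb_mono (Pb_congr Wgf.eq_def
    (Pb_mul (Pb_mul (Pb_mul (Pb_mul (Pb_mul Pb_k4 Pb_Cinv) Pb_qs) Pb_Gg) Pb_B1) h50))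
    (by norm_num)

lemma Pb_Vgf : Pb Vgf 19 := by
  have h2 : Pb (2 * hq * Su) (11/4) :=
    Pb_mono (Pb_mul (Pb_mul (Pb_num 2) Pb_hq) Pb_Su) (by norm_num)
  refine Pb_mono (Pb_congr Vgf.eq_def
    (Pb_mul (Pb_mul (Pb_mul (Pb_mul (Pb_mul Pb_k4 Pb_Cinv) Pb_qs) Pb_Gg) Pb_B1) h2))
    (by norm_num)

lemma Pb_coeff_le {f M} (h : Pb f M) (n : ℕ) : |coeff (R := ℝ) n f| ≤ M * 5 ^ n := by
  have h1 := h (n + 1)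
  have h2 : |coeff (R := ℝ) n f| * (1/5:ℝ)^n ≤ M := by
    refine le_trans ?_ h1
    refine Finset.single_le_sum (f := fun m => |coeff (R := ℝ) m f| * (1/5:ℝ)^m)
      (fun m _ => by positivity) (Finset.mem_range.2 (by omega))
  calc |coeff (R := ℝ) n f| = (|coeff (R := ℝ) n f| * (1/5:ℝ)^n) * 5^n := by
        rw [mul_assoc, ← mul_pow]; norm_num
  _ ≤ M * 5^n := mul_le_mul_of_nonneg_right h2 (by positivity)

end S9
namespace S9
open PowerSeries Filter

def Pbb (f : PowerSeries ℝ) : Prop := ∃ M, Pb f M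

lemma Pbb_mul {f g} (hf : Pbb f) (hg : Pbb g) : Pbb (f * g) :=
  ⟨_, Pb_mul hf.choose_spec hg.choose_spec⟩
lemma Pbb_add {f g} (hf : Pbb f) (hg : Pbb g) : Pbb (f + g) :=
  ⟨_, Pb_add hf.choose_spec hg.choose_spec⟩
lemma Pbb_sub {f g} (hf : Pbb f) (hg : Pbb g) : Pbb (f - g) :=
  ⟨_, Pb_sub hf.choose_spec hg.choose_spec⟩

lemma Pb_summable {f M} (h : Pb f M) : Summable (fun n => |coeff (R := ℝ) n f| * (1/5:ℝ)^n) :=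
  summable_of_sum_range_le (fun n => by positivity) h

lemma Pbb_summable_norm {f} (h : Pbb f) :
    Summable (fun n => ‖coeff (R := ℝ) n f * (4/25:ℝ)^n‖) := by
  obtain ⟨M, hM⟩ := h
  refine Summable.of_nonneg_of_le (fun n => norm_nonneg _) (fun n => ?_) (Pb_summable hM)
  rw [norm_mul, Real.norm_eq_abs, Real.norm_eq_abs, abs_of_nonneg (by positivity : (0:ℝ) ≤ (4/25:ℝ)^n)]
  refine mul_le_mul_of_nonneg_left ?_ (abs_nonneg _)
  exact pow_le_pow_left₀ (by norm_num) (by norm_num) n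

lemma Pbb_summable {f} (h : Pbb f) : Summable (fun n => coeff (R := ℝ) n f * (4/25:ℝ)^n) :=
  (Pbb_summable_norm h).of_norm

noncomputable def ev (f : PowerSeries ℝ) : ℝ := ∑' n, coeff (R := ℝ) n f * (4/25:ℝ)^n

lemma ev_mul {f g} (hf : Pbb f) (hg : Pbb g) : ev (f * g) = ev f * ev g := by
  rw [ev, ev, ev,
    tsum_mul_tsum_eq_tsum_sum_antidiagonal_of_summable_norm
      (Pbb_summable_norm hf) (Pbb_summable_norm hg)]
  refine tsum_congr fun n => ?_
  rw [PowerSeries.coeff_mul, Finset.sum_mul]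
  refine Finset.sum_congr rfl fun p hp => ?_
  rw [Finset.HasAntidiagonal.mem_antidiagonal] at hp
  rw [← hp, pow_add]
  ring

lemma ev_add {f g} (hf : Pbb f) (hg : Pbb g) : ev (f + g) = ev f + ev g := by
  rw [ev, ev, ev, ← Summable.tsum_add (Pbb_summable hf) (Pbb_summable hg)]
  exact tsum_congr fun n => by rw [map_add, add_mul]

lemma ev_sub {f g} (hf : Pbb f) (hg : Pbb g) : ev (f - g) = ev f - ev g := by
  rw [ev, ev, ev, ← Summable.tsum_sub (Pbb_summable hf) (Pbb_summable hg)]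
  exact tsum_congr fun n => by rw [map_sub, sub_mul]

lemma ev_single {f : PowerSeries ℝ} {k : ℕ} {c : ℝ}
    (h : ∀ n, coeff (R := ℝ) n f * (4/25:ℝ)^n = if n = k then c else 0) : ev f = c := by
  rw [ev]
  rw [tsum_congr h]
  exact tsum_ite_eq k (fun _ => c)

lemma ev_one : ev 1 = 1 :=
  ev_single (k := 0) fun n => by rw [PowerSeries.coeff_one]; split <;> simp [*]

lemma ev_X : ev X = 4/25 :=
  ev_single (k := 1) fun n => by rw [PowerSeries.coeff_X]; split <;> simp [*]

lemma ev_C (c : ℝ) : ev (PowerSeries.C (R := ℝ) c) = c :=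
  ev_single (k := 0) fun n => by rw [PowerSeries.coeff_C]; split <;> simp [*]

lemma ev_num (m : ℕ) [m.AtLeastTwo] : ev (OfNat.ofNat m : PowerSeries ℝ) = OfNat.ofNat m := by
  rw [show (OfNat.ofNat m : PowerSeries ℝ) = PowerSeries.C (R := ℝ) (OfNat.ofNat m) from
    (map_ofNat _ m).symm]
  exact ev_C _

lemma Pbb_Cgf : Pbb Cgf := ⟨_, Pb_Cgf⟩
lemma Pbb_X : Pbb (X : PowerSeries ℝ) := ⟨_, Pb_X⟩
lemma Pbb_one : Pbb (1 : PowerSeries ℝ) := ⟨_, Pb_one⟩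
lemma Pbb_kk : Pbb kk := ⟨_, Pb_kk⟩
lemma Pbb_k4 : Pbb k4 := ⟨_, Pb_k4⟩
lemma Pbb_num (m : ℕ) [m.AtLeastTwo] : Pbb (OfNat.ofNat m : PowerSeries ℝ) := ⟨_, Pb_num m⟩
lemma Pbb_uq : Pbb uq := ⟨_, Pb_uq⟩
lemma Pbb_Su : Pbb Su := ⟨_, Pb_Su⟩
lemma Pbb_aJ : Pbb aJ := ⟨_, Pb_aJ⟩
lemma Pbb_Gg : Pbb Gg := ⟨_, Pb_Gg⟩
lemma Pbb_qs : Pbb qs := ⟨_, Pb_qs⟩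
lemma Pbb_Cinv : Pbb Cinv := ⟨_, Pb_Cinv⟩
lemma Pbb_hq : Pbb hq := ⟨_, Pb_hq⟩
lemma Pbb_Bgf : Pbb Bgf := ⟨_, Pb_Bgf⟩
lemma Pbb_B1 : Pbb (Bgf + 1) := Pbb_add Pbb_Bgf Pbb_one

lemma ev_Cgf : ev Cgf = 5/4 := by
  have hkey : ev Cgf = 1 + (4/25) * (ev Cgf)^2 := by
    have h1 := congrArg ev keyC
    rw [pow_two] at h1
    rw [ev_add Pbb_one (Pbb_mul Pbb_X (Pbb_mul Pbb_Cgf Pbb_Cgf)), ev_one,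
      ev_mul Pbb_X (Pbb_mul Pbb_Cgf Pbb_Cgf), ev_mul Pbb_Cgf Pbb_Cgf, ev_X] at h1
    · linear_combination h1
  have hle : ev Cgf ≤ 25/9 := by
    rw [ev]
    have hsum2 : Summable (fun n : ℕ => (16/25:ℝ)^n) :=
      summable_geometric_of_lt_one (by norm_num) (by norm_num)
    have hle2 : ∀ n, coeff (R := ℝ) n Cgf * (4/25:ℝ)^n ≤ (16/25:ℝ)^n := by
      intro n
      have hc : (catalan n : ℝ) ≤ 4^n := by
        have h1 : catalan n ≤ 4^n := by
          calc catalan n = n.centralBinom / (n+1) := catalan_eq_centralBinom_div n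
          _ ≤ n.centralBinom := Nat.div_le_self _ _
          _ ≤ 4^n := by
            rw [Nat.centralBinom]
            calc (2*n).choose n ≤ ∑ i ∈ Finset.range (2*n+1), (2*n).choose i :=
                  Finset.single_le_sum (f := fun i => (2*n).choose i)
                    (fun i _ => Nat.zero_le _) (Finset.mem_range.2 (by omega))
            _ = 2 ^ (2*n) := Nat.sum_range_choose (2*n)
            _ = 4 ^ n := by rw [show (4:ℕ) = 2^2 by norm_num, ← pow_mul]
        exact_mod_cast h1
      calc coeff (R := ℝ) n Cgf * (4/25:ℝ)^n ≤ (4:ℝ)^n * (4/25:ℝ)^n := by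
            refine mul_le_mul_of_nonneg_right ?_ (by positivity)
            rw [show coeff (R := ℝ) n Cgf = (catalan n : ℝ) by simp [Cgf]]
            exact hc
      _ = (16/25:ℝ)^n := by rw [← mul_pow]; norm_num
    calc ∑' n, coeff (R := ℝ) n Cgf * (4/25:ℝ)^n ≤ ∑' n, (16/25:ℝ)^n :=
          Summable.tsum_le_tsum hle2 (Pbb_summable Pbb_Cgf) hsum2
    _ = 25/9 := by
        rw [tsum_geometric_of_lt_one (by norm_num) (by norm_num)]
        norm_num
  have hfac : (ev Cgf - 5/4) * (ev Cgf - 5) = 0 := by linear_combination (-25/4) * hkey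
  rcases mul_eq_zero.1 hfac with h | h
  · linarith
  · linarith

lemma ev_XC : ev (X * Cgf) = 1/5 := by
  rw [ev_mul Pbb_X Pbb_Cgf, ev_X, ev_Cgf]; norm_num

lemma Pbb_XC : Pbb (X * Cgf) := Pbb_mul Pbb_X Pbb_Cgf

lemma ev_Bgf : ev Bgf = 5/3 := by
  have h1 := congrArg ev Bs
  rw [ev_mul Pbb_Bgf (Pbb_sub Pbb_one (Pbb_mul (Pbb_num 2) Pbb_XC)), ev_one,
    ev_sub Pbb_one (Pbb_mul (Pbb_num 2) Pbb_XC), ev_one,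
    ev_mul (Pbb_num 2) Pbb_XC, ev_num 2, ev_XC] at h1
  nlinarith [h1]

lemma ev_kk : ev kk = 1/16 := by rw [kk, ev_C]
lemma ev_k4 : ev k4 = 1/4 := by rw [k4, ev_C]

lemma ev_uq : ev uq = 1/10 := by
  rw [show uq = kk * (5 * X + 4 * (X * Cgf)) from rfl,
    ev_mul Pbb_kk (Pbb_add (Pbb_mul (Pbb_num 5) Pbb_X) (Pbb_mul (Pbb_num 4) Pbb_XC)),
    ev_add (Pbb_mul (Pbb_num 5) Pbb_X) (Pbb_mul (Pbb_num 4) Pbb_XC),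
    ev_mul (Pbb_num 5) Pbb_X, ev_mul (Pbb_num 4) Pbb_XC,
    ev_num 5, ev_num 4, ev_X, ev_XC, ev_kk]
  norm_num

lemma ev_Su : ev Su = 5 - Real.sqrt 15 := by
  have hkey : ev Su = 1 + (1/10) * (ev Su)^2 := by
    have h1 := congrArg ev Su_eq
    rw [pow_two] at h1
    rw [ev_add Pbb_one (Pbb_mul Pbb_uq (Pbb_mul Pbb_Su Pbb_Su)), ev_one,
      ev_mul Pbb_uq (Pbb_mul Pbb_Su Pbb_Su), ev_mul Pbb_Su Pbb_Su, ev_uq] at h1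
    linear_combination h1
  have hle : ev Su ≤ 2 := by
    rw [ev]
    have h2 : ∀ n, coeff (R := ℝ) n Su * (4/25:ℝ)^n ≤ |coeff (R := ℝ) n Su| * (1/5:ℝ)^n := by
      intro n
      rw [abs_of_nonneg (nn_Su n)]
      refine mul_le_mul_of_nonneg_left ?_ (nn_Su n)
      exact pow_le_pow_left₀ (by norm_num) (by norm_num) n
    calc ∑' n, coeff (R := ℝ) n Su * (4/25:ℝ)^n ≤ ∑' n, |coeff (R := ℝ) n Su| * (1/5:ℝ)^n :=
          Summable.tsum_le_tsum h2 (Pbb_summable Pbb_Su) (Pb_summable Pb_Su)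
    _ ≤ 2 := (Pb_summable Pb_Su).tsum_le_of_sum_range_le Pb_Su
  have hs15 : Real.sqrt 15 ^ 2 = 15 := Real.sq_sqrt (by norm_num)
  have hfac : (ev Su - (5 - Real.sqrt 15)) * (ev Su - (5 + Real.sqrt 15)) = 0 := by
    linear_combination (-10) * hkey - hs15
  rcases mul_eq_zero.1 hfac with h | h
  · linarith
  · exfalso
    have h15 : (0:ℝ) ≤ Real.sqrt 15 := Real.sqrt_nonneg _
    linarith

lemma ev_aJ : ev aJ = 2/5 := by
  rw [show aJ = 4 * uq from rfl, ev_mul (Pbb_num 4) Pbb_uq, ev_num 4, ev_uq]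
  norm_num

lemma ev_Gg : ev Gg = 5/3 := by
  have h1 := congrArg ev Gg_eq
  rw [ev_add Pbb_one (Pbb_mul Pbb_aJ Pbb_Gg), ev_one, ev_mul Pbb_aJ Pbb_Gg, ev_aJ] at h1
  linarith

lemma ev_qs : ev qs = Real.sqrt 15 / 5 := by
  rw [show qs = 1 - 2 * uq * Su from rfl,
    ev_sub Pbb_one (Pbb_mul (Pbb_mul (Pbb_num 2) Pbb_uq) Pbb_Su),
    ev_mul (Pbb_mul (Pbb_num 2) Pbb_uq) Pbb_Su, ev_mul (Pbb_num 2) Pbb_uq,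
    ev_num 2, ev_uq, ev_Su, ev_one]
  ring

lemma ev_Cinv : ev Cinv = 4/5 := by
  rw [show Cinv = 1 - X * Cgf from rfl, ev_sub Pbb_one Pbb_XC, ev_one, ev_XC]
  norm_num

lemma ev_Wgf : ev Wgf = 5 * Real.sqrt 15 / 9 := by
  rw [show Wgf = k4 * Cinv * qs * Gg * (Bgf + 1) * (50 * kk) from rfl]
  rw [ev_mul (Pbb_mul (Pbb_mul (Pbb_mul (Pbb_mul Pbb_k4 Pbb_Cinv) Pbb_qs) Pbb_Gg) Pbb_B1)
      (Pbb_mul (Pbb_num 50) Pbb_kk),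
    ev_mul (Pbb_mul (Pbb_mul (Pbb_mul Pbb_k4 Pbb_Cinv) Pbb_qs) Pbb_Gg) Pbb_B1,
    ev_mul (Pbb_mul (Pbb_mul Pbb_k4 Pbb_Cinv) Pbb_qs) Pbb_Gg,
    ev_mul (Pbb_mul Pbb_k4 Pbb_Cinv) Pbb_qs,
    ev_mul Pbb_k4 Pbb_Cinv,
    ev_mul (Pbb_num 50) Pbb_kk,
    ev_add Pbb_Bgf Pbb_one,
    ev_k4, ev_Cinv, ev_qs, ev_Gg, ev_Bgf, ev_one, ev_num 50, ev_kk]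
  ring

end S9
namespace S9
open Filter Real Stirling Nat

lemma fact_eq (m : ℕ) (hm : 1 ≤ m) :
    (m ! : ℝ) = stirlingSeq m * (Real.sqrt (2 * m) * ((m : ℝ) / Real.exp 1) ^ m) := by
  have h1 : (0:ℝ) < Real.sqrt (2 * m) * ((m : ℝ) / Real.exp 1) ^ m := by
    apply mul_pos
    · apply Real.sqrt_pos.2; positivity
    · apply pow_pos; apply _root_.div_pos
      · exact_mod_cast hm
      · exact Real.exp_pos 1
  rw [stirlingSeq]
  field_simp

lemma cb_key (n : ℕ) (hn : 1 ≤ n) :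
    (n.centralBinom : ℝ) * Real.sqrt (Real.pi * n) / 4 ^ n
      = stirlingSeq (2 * n) / (stirlingSeq n) ^ 2 * Real.sqrt Real.pi := by
  have hn0 : (0:ℝ) < n := by exact_mod_cast hn
  have hcb : (n.centralBinom : ℝ) = ((2 * n)! : ℝ) / ((n ! : ℝ) * (n ! : ℝ)) := by
    have h := Nat.choose_mul_factorial_mul_factorial (show n ≤ 2 * n by omega)
    rw [Nat.centralBinom]
    have h2 : (2 * n - n) = n := by omega
    rw [h2] at h
    have h3 : ((2*n).choose n : ℝ) * (n ! : ℝ) * (n ! : ℝ) = ((2*n)! : ℝ) := by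
      exact_mod_cast h
    have hf : (0:ℝ) < (n ! : ℝ) := by exact_mod_cast n.factorial_pos
    field_simp
    linarith [h3]
  rw [hcb, fact_eq (2*n) (by omega), fact_eq n hn]
  have hst : 0 < stirlingSeq n := by
    obtain ⟨m, rfl⟩ : ∃ m, n = m + 1 := ⟨n - 1, by omega⟩
    exact stirlingSeq'_pos m
  have hst2 : 0 < stirlingSeq (2 * n) := by
    obtain ⟨m, hm⟩ : ∃ m, 2 * n = m + 1 := ⟨2*n - 1, by omega⟩
    rw [hm]; exact stirlingSeq'_pos m
  have hsqn : Real.sqrt (2 * (n:ℝ)) > 0 := Real.sqrt_pos.2 (by positivity)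
  have hsq2n : Real.sqrt (2 * ((2*n : ℕ):ℝ)) > 0 := Real.sqrt_pos.2 (by positivity)
  have hpow : (0:ℝ) < ((n:ℝ) / Real.exp 1) ^ n := pow_pos (by positivity) n
  -- key power identity
  have hp2 : (((2*n : ℕ):ℝ) / Real.exp 1) ^ (2*n) = 4 ^ n * (((n:ℝ) / Real.exp 1) ^ n) ^ 2 := by
    push_cast
    rw [show (2 * (n:ℝ)) / Real.exp 1 = 2 * ((n:ℝ) / Real.exp 1) by ring, mul_pow, ← pow_mul,
      pow_mul 2 2 n]
    ring_nf
  have hs2 : Real.sqrt (2 * ((2*n:ℕ):ℝ)) = 2 * Real.sqrt (n:ℝ) := by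
    push_cast
    rw [show 2 * (2 * (n:ℝ)) = 4 * n by ring, show (4 : ℝ) * n = 2^2 * n by norm_num,
      Real.sqrt_mul (by positivity), Real.sqrt_sq (by norm_num)]
  have hspi : Real.sqrt (Real.pi * n) = Real.sqrt Real.pi * Real.sqrt (n:ℝ) :=
    Real.sqrt_mul Real.pi_nonneg _
  have hsn2 : Real.sqrt (2 * (n:ℝ)) = Real.sqrt 2 * Real.sqrt (n:ℝ) := Real.sqrt_mul (by norm_num) _
  have hnn : Real.sqrt (n:ℝ) * Real.sqrt (n:ℝ) = (n:ℝ) := Real.mul_self_sqrt (le_of_lt hn0)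
  have hsqrt2 : Real.sqrt 2 > 0 := Real.sqrt_pos.2 (by norm_num)
  have hsqrtn : Real.sqrt (n:ℝ) > 0 := Real.sqrt_pos.2 hn0
  rw [hp2, hs2, hspi, hsn2]
  field_simp
  ring_nf
  rw [Real.sq_sqrt (by norm_num : (0:ℝ) ≤ 2)]

lemma cb_tendsto :
    Tendsto (fun n : ℕ => (n.centralBinom : ℝ) * Real.sqrt (Real.pi * n) / 4 ^ n)
      atTop (nhds 1) := by
  have h1 : Tendsto stirlingSeq atTop (nhds (Real.sqrt Real.pi)) := tendsto_stirlingSeq_sqrt_pi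
  have h2 : Tendsto (fun n : ℕ => stirlingSeq (2 * n)) atTop (nhds (Real.sqrt Real.pi)) := by
    apply h1.comp
    exact tendsto_atTop_mono (fun n => by omega : ∀ n : ℕ, n ≤ 2 * n) tendsto_id
  have hpi : Real.sqrt Real.pi ≠ 0 := ne_of_gt (Real.sqrt_pos.2 Real.pi_pos)
  have h3 : Tendsto (fun n : ℕ => stirlingSeq (2*n) / (stirlingSeq n) ^ 2 * Real.sqrt Real.pi)
      atTop (nhds (Real.sqrt Real.pi / (Real.sqrt Real.pi) ^ 2 * Real.sqrt Real.pi)) := by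
    exact ((h2.div (h1.pow 2) (by positivity)).mul_const _)
  have h4 : Real.sqrt Real.pi / (Real.sqrt Real.pi) ^ 2 * Real.sqrt Real.pi = 1 := by
    field_simp
  rw [h4] at h3
  refine h3.congr' ?_
  filter_upwards [eventually_ge_atTop 1] with n hn
  exact (cb_key n hn).symm

lemma e_tendsto :
    Tendsto (fun k : ℕ => (catalan k : ℝ) / 4 ^ k * Real.sqrt (Real.pi * (k:ℝ) ^ 3))
      atTop (nhds 1) := by
  have hfrac : Tendsto (fun k : ℕ => (k : ℝ) / ((k : ℝ) + 1)) atTop (nhds 1) := by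
    have := Filter.Tendsto.div_atTop (f := fun _ : ℕ => (1:ℝ)) tendsto_const_nhds
      (tendsto_atTop_add_const_right atTop 1 tendsto_natCast_atTop_atTop)
    have h2 : Tendsto (fun k : ℕ => 1 - 1 / ((k:ℝ)+1)) atTop (nhds (1 - 0)) :=
      tendsto_const_nhds.sub this
    rw [sub_zero] at h2
    refine h2.congr' ?_
    filter_upwards [eventually_ge_atTop 1] with k hk
    have : ((k:ℝ)+1) ≠ 0 := by positivity
    field_simp
    ring
  have hmain := cb_tendsto.mul hfrac
  rw [mul_one] at hmain
  refine hmain.congr' ?_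
  filter_upwards [eventually_ge_atTop 1] with k hk
  have hk0 : (0:ℝ) < (k:ℝ) := by exact_mod_cast hk
  have hcat : (catalan k : ℝ) = (k.centralBinom : ℝ) / ((k:ℝ) + 1) := by
    have h := succ_mul_catalan_eq_centralBinom k
    have h2 : ((k+1) * catalan k : ℕ) = (k.centralBinom : ℕ) := h
    have h3 : ((k:ℝ)+1) * (catalan k : ℝ) = (k.centralBinom : ℝ) := by exact_mod_cast h2
    field_simp
    linarith
  have hsq : Real.sqrt (Real.pi * (k:ℝ)^3) = Real.sqrt (Real.pi * k) * k := by
    rw [show Real.pi * (k:ℝ)^3 = (Real.pi * k) * (k:ℝ)^2 by ring,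
      Real.sqrt_mul (by positivity), Real.sqrt_sq (le_of_lt hk0)]
  rw [hcat, hsq]
  field_simp

lemma e_shift (j : ℕ) :
    Tendsto (fun m : ℕ => (catalan m : ℝ) / 4 ^ m * Real.sqrt (Real.pi * ((m:ℝ) + j) ^ 3))
      atTop (nhds 1) := by
  have hratio : Tendsto (fun m : ℕ => Real.sqrt ((((m:ℝ) + j) / m) ^ 3)) atTop (nhds 1) := by
    have h1 : Tendsto (fun m : ℕ => ((m:ℝ) + j) / m) atTop (nhds 1) := by
      have hj : Tendsto (fun m : ℕ => (j:ℝ) / m) atTop (nhds 0) :=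
        Filter.Tendsto.div_atTop tendsto_const_nhds tendsto_natCast_atTop_atTop
      have h2 : Tendsto (fun m : ℕ => 1 + (j:ℝ)/m) atTop (nhds (1 + 0)) :=
        tendsto_const_nhds.add hj
      rw [add_zero] at h2
      refine h2.congr' ?_
      filter_upwards [eventually_ge_atTop 1] with m hm
      have hm0 : (m:ℝ) ≠ 0 := by positivity
      field_simp
    have hc : ContinuousAt (fun x : ℝ => Real.sqrt (x ^ 3)) 1 :=
      (Real.continuous_sqrt.comp (continuous_pow 3)).continuousAt
    have h3 := hc.tendsto.comp h1
    have h4 : Real.sqrt ((1:ℝ)^3) = 1 := by rw [one_pow, Real.sqrt_one]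
    rw [Function.comp_def] at h3
    rw [h4] at h3
    exact h3
  have hmain := e_tendsto.mul hratio
  rw [mul_one] at hmain
  refine hmain.congr' ?_
  filter_upwards [eventually_ge_atTop 1] with m hm
  have hm0 : (0:ℝ) < (m:ℝ) := by exact_mod_cast hm
  have key : Real.sqrt (Real.pi * (m:ℝ)^3) * Real.sqrt ((((m:ℝ)+j)/m)^3)
      = Real.sqrt (Real.pi * ((m:ℝ)+j)^3) := by
    rw [← Real.sqrt_mul (by positivity)]
    congr 1
    field_simp
  show (catalan m : ℝ) / 4 ^ m * Real.sqrt (Real.pi * (m:ℝ)^3) * Real.sqrt ((((m:ℝ)+j)/m)^3)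
    = (catalan m : ℝ) / 4 ^ m * Real.sqrt (Real.pi * ((m:ℝ) + j) ^ 3)
  rw [mul_assoc, key]

end S9
namespace S9
open PowerSeries Filter Real

lemma coeff_Sr (k : ℕ) : coeff (R := ℝ) k Sr = (25/16:ℝ)^k * (catalan k : ℝ) := by
  have harg : kk * (25 * X) = PowerSeries.C (R := ℝ) (25/16) * X := by
    rw [kk, show ((25:PowerSeries ℝ)) = PowerSeries.C (R := ℝ) 25 from (map_ofNat _ 25).symm,
      ← mul_assoc, ← map_mul]
    norm_num
  rw [show Sr = PScomp Cgf (kk * (25 * X)) from rfl, harg, coeff_PScomp]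
  rw [Finset.sum_eq_single k]
  · rw [mul_pow, ← map_pow, PowerSeries.coeff_C_mul, PowerSeries.coeff_X_pow, if_pos rfl]
    simp [Cgf]
    ring
  · intro i _ hik
    rw [mul_pow, ← map_pow, PowerSeries.coeff_C_mul, PowerSeries.coeff_X_pow,
      if_neg (fun h => hik h.symm)]
    ring
  · intro hk
    exact absurd (Finset.mem_range.2 (Nat.lt_succ_self k)) hk

noncomputable def Gfun (n j : ℕ) : ℝ :=
  if j ≤ n then (coeff (R := ℝ) j Wgf * (4/25:ℝ)^j)
    * ((catalan (n-j) : ℝ) / 4^(n-j) * Real.sqrt (Real.pi * (n:ℝ)^3)) else 0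

lemma claimA (n : ℕ) :
    coeff (R := ℝ) n (Wgf * Sr) * Real.sqrt (Real.pi * (n:ℝ)^3) * (4/25:ℝ)^n = ∑' j, Gfun n j := by
  have hsupp : ∀ j ∉ Finset.range (n+1), Gfun n j = 0 := by
    intro j hj
    rw [Finset.mem_range] at hj
    rw [Gfun, if_neg (by omega)]
  rw [tsum_eq_sum hsupp, PowerSeries.coeff_mul,
    Finset.Nat.sum_antidiagonal_eq_sum_range_succ_mk, Finset.sum_mul, Finset.sum_mul]
  refine Finset.sum_congr rfl fun j hj => ?_
  rw [Finset.mem_range] at hj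
  have hjn : j ≤ n := by omega
  rw [Gfun, if_pos hjn, coeff_Sr]
  have hsplit : (4/25:ℝ)^n = (4/25:ℝ)^j * (4/25:ℝ)^(n-j) := by
    rw [← pow_add]
    congr 1
    omega
  rw [hsplit]
  have hm : (25/16:ℝ)^(n-j) * (4/25:ℝ)^(n-j) = ((4:ℝ)^(n-j))⁻¹ := by
    rw [← mul_pow]
    norm_num
    rw [show (1/4:ℝ) = (4:ℝ)⁻¹ by norm_num, inv_pow]
  have hdiv : (catalan (n-j) : ℝ) / 4^(n-j) = (catalan (n-j) : ℝ) * ((4:ℝ)^(n-j))⁻¹ :=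
    div_eq_mul_inv _ _
  rw [hdiv]
  linear_combination (coeff (R := ℝ) j Wgf * (catalan (n-j) : ℝ)
    * Real.sqrt (Real.pi * (n:ℝ)^3) * (4/25:ℝ)^j) * hm

lemma claimB (j : ℕ) :
    Tendsto (fun n => Gfun n j) atTop (nhds (coeff (R := ℝ) j Wgf * (4/25:ℝ)^j)) := by
  have h1 : Tendsto (fun m : ℕ =>
      (coeff (R := ℝ) j Wgf * (4/25:ℝ)^j) * ((catalan m : ℝ) / 4 ^ m * Real.sqrt (Real.pi * ((m:ℝ) + j) ^ 3)))
      atTop (nhds ((coeff (R := ℝ) j Wgf * (4/25:ℝ)^j) * 1)) := tendsto_const_nhds.mul (e_shift j)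
  rw [mul_one] at h1
  have h2 := h1.comp (tendsto_sub_atTop_nat j)
  refine h2.congr' ?_
  filter_upwards [eventually_ge_atTop j] with n hn
  simp only [Function.comp]
  rw [Gfun, if_pos hn]
  congr 3
  have : ((n - j : ℕ) : ℝ) = (n:ℝ) - j := by
    push_cast [Nat.cast_sub hn]
    ring
  rw [this]
  ring

lemma claimE :
    Tendsto (fun n : ℕ => coeff (R := ℝ) n Vgf * Real.sqrt (Real.pi * (n:ℝ)^3) * (4/25:ℝ)^n)
      atTop (nhds 0) := by
  have hb : ∀ n : ℕ, |coeff (R := ℝ) n Vgf * Real.sqrt (Real.pi * (n:ℝ)^3) * (4/25:ℝ)^n|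
      ≤ 19 * Real.sqrt Real.pi * (((n:ℝ)+1)^2 * (4/5:ℝ)^n) := by
    intro n
    rw [abs_mul, abs_mul]
    have h1 : |coeff (R := ℝ) n Vgf| ≤ 19 * 5^n := Pb_coeff_le Pb_Vgf n
    have h2 : |Real.sqrt (Real.pi * (n:ℝ)^3)| = Real.sqrt (Real.pi * (n:ℝ)^3) :=
      abs_of_nonneg (Real.sqrt_nonneg _)
    have h3 : |(4/25:ℝ)^n| = (4/25:ℝ)^n := abs_of_nonneg (by positivity)
    rw [h2, h3]
    have h4 : Real.sqrt (Real.pi * (n:ℝ)^3) ≤ Real.sqrt Real.pi * ((n:ℝ)+1)^2 := by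
      rw [Real.sqrt_mul Real.pi_nonneg]
      refine mul_le_mul_of_nonneg_left ?_ (Real.sqrt_nonneg _)
      rw [show (((n:ℝ))+1)^2 = Real.sqrt ((((n:ℝ))+1)^4) by
        rw [show (((n:ℝ))+1)^4 = ((((n:ℝ))+1)^2)^2 by ring, Real.sqrt_sq (by positivity)]]
      refine Real.sqrt_le_sqrt ?_
      nlinarith [sq_nonneg (n:ℝ), (by positivity : (0:ℝ) ≤ (n:ℝ))]
    calc |coeff (R := ℝ) n Vgf| * Real.sqrt (Real.pi * (n:ℝ)^3) * (4/25:ℝ)^n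
        ≤ (19 * 5^n) * (Real.sqrt Real.pi * ((n:ℝ)+1)^2) * (4/25:ℝ)^n := by
          refine mul_le_mul_of_nonneg_right ?_ (by positivity)
          exact mul_le_mul h1 h4 (Real.sqrt_nonneg _) (by positivity)
    _ = 19 * Real.sqrt Real.pi * (((n:ℝ)+1)^2 * ((5:ℝ)^n * (4/25:ℝ)^n)) := by ring
    _ = 19 * Real.sqrt Real.pi * (((n:ℝ)+1)^2 * (4/5:ℝ)^n) := by
          rw [← mul_pow]; norm_num
  have hsum : Summable (fun n : ℕ => 19 * Real.sqrt Real.pi * (((n:ℝ)+1)^2 * (4/5:ℝ)^n)) := by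
    apply Summable.mul_left
    have h0 : Summable (fun n : ℕ => ((n:ℝ)^2 + 2*n + 1) * (4/5:ℝ)^n) := by
      have ha : Summable (fun n : ℕ => (n:ℝ)^2 * (4/5:ℝ)^n) := by
        simpa using summable_pow_mul_geometric_of_norm_lt_one 2 (r := (4/5:ℝ)) (by norm_num)
      have hb' : Summable (fun n : ℕ => (n:ℝ) * (4/5:ℝ)^n) := by
        simpa using summable_pow_mul_geometric_of_norm_lt_one 1 (r := (4/5:ℝ)) (by norm_num)
      have hc' : Summable (fun n : ℕ => (4/5:ℝ)^n) :=
        summable_geometric_of_lt_one (by norm_num) (by norm_num)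
      have := (ha.add ((hb'.mul_left 2).add hc'))
      refine this.congr fun n => ?_
      ring
    refine h0.congr fun n => ?_
    ring
  have htend := hsum.tendsto_atTop_zero
  have hneg : Tendsto (fun n : ℕ => -(19 * Real.sqrt Real.pi * (((n:ℝ)+1)^2 * (4/5:ℝ)^n)))
      atTop (nhds 0) := by simpa using htend.neg
  refine tendsto_of_tendsto_of_tendsto_of_le_of_le hneg htend (fun n => ?_) (fun n => ?_)
  · have := hb n
    have h5 := neg_abs_le (coeff (R := ℝ) n Vgf * Real.sqrt (Real.pi * (n:ℝ)^3) * (4/25:ℝ)^n)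
    linarith
  · have := hb n
    have h5 := le_abs_self (coeff (R := ℝ) n Vgf * Real.sqrt (Real.pi * (n:ℝ)^3) * (4/25:ℝ)^n)
    linarith

lemma claimD :
    Tendsto (fun n : ℕ => ∑' j, Gfun n j) atTop (nhds (5 * Real.sqrt 15 / 9)) := by
  -- bound
  obtain ⟨K, hK⟩ := (e_shift 1).bddAbove_range
  rw [mem_upperBounds] at hK
  have hK' : ∀ m : ℕ, (catalan m : ℝ) / 4 ^ m * Real.sqrt (Real.pi * ((m:ℝ) + 1) ^ 3) ≤ K := by
    intro m
    have h := hK _ ⟨m, rfl⟩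
    simpa using h
  have hK0 : 0 ≤ K := le_trans (by positivity) (hK' 0)
  have hbound : ∀ n j, |Gfun n j| ≤ 21 * K * (((j:ℝ)+1)^2 * (4/5:ℝ)^j) := by
    intro n j
    by_cases hjn : j ≤ n
    · rw [Gfun, if_pos hjn]
      set m := n - j with hm
      have hnm : (n:ℝ) = (m:ℝ) + j := by
        rw [hm]
        push_cast [Nat.cast_sub hjn]
        ring
      have hW : |coeff (R := ℝ) j Wgf| ≤ 21 * 5^j := Pb_coeff_le Pb_Wgf j
      have hsq : Real.sqrt (Real.pi * (n:ℝ)^3)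
          ≤ Real.sqrt (Real.pi * ((m:ℝ)+1)^3) * ((j:ℝ)+1)^2 := by
        have hle : Real.pi * (n:ℝ)^3 ≤ (Real.pi * ((m:ℝ)+1)^3) * (((j:ℝ)+1)^2)^2 := by
          rw [hnm]
          have hx : (0:ℝ) ≤ (m:ℝ) := by positivity
          have hy : (0:ℝ) ≤ (j:ℝ) := by positivity
          have hmj : ((m:ℝ) + j) ≤ ((m:ℝ)+1) * ((j:ℝ)+1) := by nlinarith
          have h3 : ((m:ℝ) + j)^3 ≤ (((m:ℝ)+1) * ((j:ℝ)+1))^3 :=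
            pow_le_pow_left₀ (by positivity) hmj 3
          have h6 : (((m:ℝ)+1) * ((j:ℝ)+1))^3 = ((m:ℝ)+1)^3 * ((j:ℝ)+1)^3 := mul_pow _ _ 3
          have h7 : ((j:ℝ)+1)^3 ≤ (((j:ℝ)+1)^2)^2 := by nlinarith [pow_nonneg hy 3, pow_nonneg hy 2]
          have h8 : ((m:ℝ)+1)^3 * ((j:ℝ)+1)^3 ≤ ((m:ℝ)+1)^3 * (((j:ℝ)+1)^2)^2 :=
            mul_le_mul_of_nonneg_left h7 (by positivity)
          calc Real.pi * ((m:ℝ)+j)^3 ≤ Real.pi * (((m:ℝ)+1)^3 * (((j:ℝ)+1)^2)^2) := by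
                refine mul_le_mul_of_nonneg_left ?_ Real.pi_nonneg
                calc ((m:ℝ)+j)^3 ≤ (((m:ℝ)+1) * ((j:ℝ)+1))^3 := h3
                _ = ((m:ℝ)+1)^3 * ((j:ℝ)+1)^3 := h6
                _ ≤ _ := h8
          _ = (Real.pi * ((m:ℝ)+1)^3) * (((j:ℝ)+1)^2)^2 := by ring
        calc Real.sqrt (Real.pi * (n:ℝ)^3)
            ≤ Real.sqrt ((Real.pi * ((m:ℝ)+1)^3) * (((j:ℝ)+1)^2)^2) := Real.sqrt_le_sqrt hle
        _ = Real.sqrt (Real.pi * ((m:ℝ)+1)^3) * ((j:ℝ)+1)^2 := by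
            rw [Real.sqrt_mul (by positivity), Real.sqrt_sq (by positivity)]
      have hcat : (0:ℝ) ≤ (catalan m : ℝ) / 4^m := by positivity
      rw [abs_mul]
      have hterm2 : |(catalan m : ℝ) / 4^m * Real.sqrt (Real.pi * (n:ℝ)^3)|
          ≤ K * ((j:ℝ)+1)^2 := by
        rw [abs_of_nonneg (by positivity)]
        calc (catalan m : ℝ) / 4^m * Real.sqrt (Real.pi * (n:ℝ)^3)
            ≤ (catalan m : ℝ) / 4^m * (Real.sqrt (Real.pi * ((m:ℝ)+1)^3) * ((j:ℝ)+1)^2) :=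
              mul_le_mul_of_nonneg_left hsq hcat
        _ = ((catalan m : ℝ) / 4^m * Real.sqrt (Real.pi * ((m:ℝ)+1)^3)) * ((j:ℝ)+1)^2 := by ring
        _ ≤ K * ((j:ℝ)+1)^2 := mul_le_mul_of_nonneg_right (hK' m) (by positivity)
      have hterm1 : |coeff (R := ℝ) j Wgf * (4/25:ℝ)^j| ≤ 21 * (4/5:ℝ)^j := by
        rw [abs_mul, abs_of_nonneg (by positivity : (0:ℝ) ≤ (4/25:ℝ)^j)]
        calc |coeff (R := ℝ) j Wgf| * (4/25:ℝ)^j ≤ (21 * 5^j) * (4/25:ℝ)^j :=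
              mul_le_mul_of_nonneg_right hW (by positivity)
        _ = 21 * ((5:ℝ)^j * (4/25:ℝ)^j) := by ring
        _ = 21 * (4/5:ℝ)^j := by rw [← mul_pow]; norm_num
      calc |coeff (R := ℝ) j Wgf * (4/25:ℝ)^j| * |(catalan m : ℝ) / 4^m * Real.sqrt (Real.pi * (n:ℝ)^3)|
          ≤ (21 * (4/5:ℝ)^j) * (K * ((j:ℝ)+1)^2) := by
            exact mul_le_mul hterm1 hterm2 (abs_nonneg _) (by positivity)
      _ = 21 * K * (((j:ℝ)+1)^2 * (4/5:ℝ)^j) := by ring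
    · rw [Gfun, if_neg hjn, abs_zero]
      positivity
  have hsum : Summable (fun j : ℕ => 21 * K * (((j:ℝ)+1)^2 * (4/5:ℝ)^j)) := by
    apply Summable.mul_left
    have h0 : Summable (fun n : ℕ => ((n:ℝ)^2 + 2*n + 1) * (4/5:ℝ)^n) := by
      have ha : Summable (fun n : ℕ => (n:ℝ)^2 * (4/5:ℝ)^n) := by
        simpa using summable_pow_mul_geometric_of_norm_lt_one 2 (r := (4/5:ℝ)) (by norm_num)
      have hb' : Summable (fun n : ℕ => (n:ℝ) * (4/5:ℝ)^n) := by
        simpa using summable_pow_mul_geometric_of_norm_lt_one 1 (r := (4/5:ℝ)) (by norm_num)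
      have hc' : Summable (fun n : ℕ => (4/5:ℝ)^n) :=
        summable_geometric_of_lt_one (by norm_num) (by norm_num)
      have := (ha.add ((hb'.mul_left 2).add hc'))
      refine this.congr fun n => ?_
      ring
    refine h0.congr fun n => ?_
    ring
  have hmain := tendsto_tsum_of_dominated_convergence (f := Gfun)
    (g := fun j => coeff (R := ℝ) j Wgf * (4/25:ℝ)^j) hsum claimB
    (Eventually.of_forall (fun n => fun j => by
      rw [Real.norm_eq_abs]; exact hbound n j))
  have hW : ∑' j, coeff (R := ℝ) j Wgf * (4/25:ℝ)^j = 5 * Real.sqrt 15 / 9 := ev_Wgf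
  rw [hW] at hmain
  exact hmain

end S9

/-- The coefficients `aₙ = [zⁿ]T_M` satisfy `aₙ ∼ (5√15/9)·(1/√(π n³))·(25/4)ⁿ`. -/
theorem stmt9 :
    Tendsto
      (fun n : ℕ =>
        PowerSeries.coeff (R := ℝ) n TM * Real.sqrt (Real.pi * (n : ℝ) ^ 3) / (25 / 4 : ℝ) ^ n)
      atTop (nhds (5 * Real.sqrt 15 / 9)) := by
  have key : ∀ n : ℕ, PowerSeries.coeff (R := ℝ) n TM * Real.sqrt (Real.pi * (n : ℝ) ^ 3) / (25 / 4 : ℝ) ^ n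
      = (∑' j, S9.Gfun n j)
        - PowerSeries.coeff (R := ℝ) n S9.Vgf * Real.sqrt (Real.pi * (n:ℝ)^3) * (4/25:ℝ)^n := by
    intro n
    rw [← S9.claimA n]
    have hTM : PowerSeries.coeff (R := ℝ) n TM
        = PowerSeries.coeff (R := ℝ) n (S9.Wgf * S9.Sr) - PowerSeries.coeff (R := ℝ) n S9.Vgf := by
      rw [S9.TMdecomp, map_sub]
    rw [hTM]
    have hpow : ((25/4:ℝ))^n ≠ 0 := by positivity
    have hinv : (1:ℝ) / (25/4:ℝ)^n = (4/25:ℝ)^n := by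
      rw [show (4/25:ℝ) = (25/4:ℝ)⁻¹ by norm_num, inv_pow]
      exact (one_div _)
    rw [div_eq_mul_one_div _ ((25/4:ℝ)^n), hinv]
    ring
  rw [show (5 * Real.sqrt 15 / 9 : ℝ) = 5 * Real.sqrt 15 / 9 - 0 by ring]
  refine Filter.Tendsto.congr (fun n => (key n).symm) (S9.claimD.sub S9.claimE)
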